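/- Every weighted threshold function is regular: if f admits weights w_1 ≥ ... ≥ w_n (after reordering) realizing it as a weighted threshold function, then for every pair of variables i, j either i dominates j or j dominates i in f. -/
import Mathlib


/-- Variable `i` dominates variable `j` in the switching function `f`. -/
def Dominates {n : ℕ} (f : (Fin n → Bool) → Bool) (i j : Fin n) : Prop :=
  ∀ x : Fin n → Bool, f x = true → x i = false → x j = true →
    f (Function.update (Function.update x i true) j false) = true

lemma dom_of_weight {n : ℕ} (f : (Fin n → Bool) → Bool) (w : Fin n → ℕ)
    (hw : ∀ x y : Fin n → Bool, f x = true → f y = false →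
      ∑ i, w i * (y i).toNat < ∑ i, w i * (x i).toNat)
    (i j : Fin n) (hij : w j ≤ w i) : Dominates f i j := by
  intro x hx hxi hxj
  have hne : i ≠ j := by rintro rfl; rw [hxi] at hxj; exact Bool.false_ne_true hxj
  set y := Function.update (Function.update x i true) j false with hy
  by_contra hfy
  have hfy' : f y = false := by
    cases h : f y
    · rfl
    · exact absurd h hfy
  have hlt := hw x y hx hfy'
  have key : ∀ v : Fin n → Bool, ∑ k, w k * (v k).toNat =
      w i * (v i).toNat + (w j * (v j).toNat +
        ∑ k ∈ (Finset.univ.erase i).erase j, w k * (v k).toNat) := by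
    intro v
    rw [← Finset.add_sum_erase _ _ (Finset.mem_univ i),
      ← Finset.add_sum_erase _ _ (Finset.mem_erase.2 ⟨hne.symm, Finset.mem_univ j⟩)]
  have hyi : y i = true := by
    simp [hy, Function.update_of_ne hne, Function.update_self]
  have hyj : y j = false := by simp [hy]
  have hrest : ∑ k ∈ (Finset.univ.erase i).erase j, w k * (y k).toNat =
      ∑ k ∈ (Finset.univ.erase i).erase j, w k * (x k).toNat := by
    apply Finset.sum_congr rfl
    intro k hk
    rw [Finset.mem_erase, Finset.mem_erase] at hk
    obtain ⟨hkj, hki, -⟩ := hk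
    rw [hy, Function.update_of_ne hkj, Function.update_of_ne hki]
  rw [key x, key y, hyi, hyj, hxi, hxj, hrest] at hlt
  simp only [Bool.toNat_true, Bool.toNat_false, mul_one, mul_zero, zero_add, add_zero] at hlt
  omega

/-- Every weighted threshold function is regular: the dominance relation is complete. -/
theorem stmt4 (n : ℕ) (f : (Fin n → Bool) → Bool)
    (hweighted : ∃ w : Fin n → ℕ, ∀ x y : Fin n → Bool, f x = true → f y = false →
      ∑ i, w i * (y i).toNat < ∑ i, w i * (x i).toNat) :
    ∀ i j : Fin n, Dominates f i j ∨ Dominates f j i := by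
  obtain ⟨w, hw⟩ := hweighted
  intro i j
  rcases le_total (w j) (w i) with h | h
  · exact Or.inl (dom_of_weight f w hw i j h)
  · exact Or.inr (dom_of_weight f w hw j i h)
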